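/- Let W be a node chosen uniformly at random among the nodes of a random binary search tree with n nodes (under the permutation model). Then, conditionally on |W| = k, the word W = w₁⋯w_k has letters w₁, …, w_k that are independent and uniformly distributed on {0,1}. -/

import Mathlib

open scoped ENNReal

/-- Uniform distribution on a finite set of binary words (junk value if empty). -/
noncomputable def unifOr (s : Finset (List Bool)) : PMF (List Bool) :=
  if h : s.Nonempty then PMF.uniformOfFinset s h else PMF.pure []

/-- External positions (leaves of the completed tree) of an incomplete binary tree. -/
def extPos (t : Finset (List Bool)) : Finset (List Bool) :=
  (t.image (fun u => u ++ [false]) ∪ t.image (fun u => u ++ [true])) \ t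

/-- The random binary search tree under the permutation model, as a Markov chain:
start from the root and repeatedly insert a uniformly chosen external position. -/
noncomputable def bstPMF : ℕ → PMF (Finset (List Bool))
  | 0 => PMF.pure {([] : List Bool)}
  | n + 1 => (bstPMF n).bind fun t => (unifOr (extPos t)).map fun u => insert u t

/-- Flip the bit just after prefix `u` in `v`. -/
def flipAt : List Bool → List Bool → List Bool
  | [], [] => []
  | [], b :: v => (!b) :: v
  | _ :: _, [] => []
  | a :: u, b :: v => if a = b then b :: flipAt u v else b :: v

lemma flipAt_nil (u : List Bool) : flipAt u [] = [] := by
  cases u <;> rfl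

lemma flipAt_flipAt (u v : List Bool) : flipAt u (flipAt u v) = v := by
  induction u generalizing v with
  | nil => cases v with
    | nil => rfl
    | cons b v => simp [flipAt]
  | cons a u ih => cases v with
    | nil => rfl
    | cons b v =>
      by_cases h : a = b
      · simp [flipAt, h, ih]
      · simp [flipAt, h]

lemma flipAt_involutive (u : List Bool) : Function.Involutive (flipAt u) :=
  flipAt_flipAt u

lemma flipAt_injective (u : List Bool) : Function.Injective (flipAt u) :=
  (flipAt_involutive u).injective

lemma flipAt_self (u : List Bool) : flipAt u u = u := by
  induction u with
  | nil => rfl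
  | cons a u ih => simp [flipAt, ih]

lemma length_flipAt (u v : List Bool) : (flipAt u v).length = v.length := by
  induction u generalizing v with
  | nil => cases v with
    | nil => rfl
    | cons b v => simp [flipAt]
  | cons a u ih => cases v with
    | nil => rfl
    | cons b v =>
      by_cases h : a = b
      · simp [flipAt, h, ih]
      · simp [flipAt, h]

lemma flipAt_append_singleton (u v : List Bool) (b : Bool) :
    flipAt u (v ++ [b]) = if v = u then v ++ [!b] else flipAt u v ++ [b] := by
  induction u generalizing v with
  | nil => cases v with
    | nil => simp [flipAt]
    | cons c v => simp [flipAt]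
  | cons a u ih => cases v with
    | nil => simp [flipAt, flipAt_nil]
    | cons c v =>
      by_cases h : a = c
      · subst h
        simp only [List.cons_append, flipAt, if_pos rfl, ih]
        by_cases h2 : v = u <;> simp [h2, ih]
      · have : ¬ (c :: v = a :: u) := by simp [Ne.symm h]
        simp [flipAt, h, this]

lemma flipAt_append_cons (u r : List Bool) (b : Bool) :
    flipAt u (u ++ b :: r) = u ++ (!b) :: r := by
  induction u with
  | nil => rfl
  | cons a u ih => simp [flipAt, ih]

lemma image_extPos (u : List Bool) (t : Finset (List Bool)) :
    (extPos t).image (flipAt u) = extPos (t.image (flipAt u)) := by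
  classical
  unfold extPos
  rw [Finset.image_sdiff _ _ (flipAt_injective u)]
  congr 1
  rw [Finset.image_union, Finset.image_image, Finset.image_image,
    Finset.image_image, Finset.image_image]
  ext x
  simp only [Finset.mem_union, Finset.mem_image, Function.comp_apply]
  constructor
  · rintro (⟨v, hv, rfl⟩ | ⟨v, hv, rfl⟩) <;> rw [flipAt_append_singleton] <;>
      by_cases h : v = u
    · subst h; rw [if_pos rfl]; right; exact ⟨v, hv, by simp [flipAt_self]⟩
    · rw [if_neg h]; left; exact ⟨v, hv, rfl⟩
    · subst h; rw [if_pos rfl]; left; exact ⟨v, hv, by simp [flipAt_self]⟩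
    · rw [if_neg h]; right; exact ⟨v, hv, rfl⟩
  · rintro (⟨v, hv, rfl⟩ | ⟨v, hv, rfl⟩) <;> by_cases h : v = u
    · subst h; right
      exact ⟨v, hv, by rw [flipAt_append_singleton, if_pos rfl]; simp [flipAt_self]⟩
    · left; exact ⟨v, hv, by rw [flipAt_append_singleton, if_neg h]⟩
    · subst h; left
      exact ⟨v, hv, by rw [flipAt_append_singleton, if_pos rfl]; simp [flipAt_self]⟩
    · right; exact ⟨v, hv, by rw [flipAt_append_singleton, if_neg h]⟩

lemma unifOr_map (f : List Bool → List Bool) (hf : Function.Injective f)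
    (hf0 : f [] = []) (s : Finset (List Bool)) :
    (unifOr s).map f = unifOr (s.image f) := by
  classical
  unfold unifOr
  rcases s.eq_empty_or_nonempty with rfl | h
  · simp [hf0, PMF.pure_map]
  · rw [dif_pos h, dif_pos (h.image f)]
    ext b
    rw [PMF.map_apply, PMF.uniformOfFinset_apply]
    by_cases hb : b ∈ s.image f
    · obtain ⟨a₀, ha₀, rfl⟩ := Finset.mem_image.mp hb
      rw [if_pos hb, Finset.card_image_of_injective _ hf,
        tsum_eq_single a₀ (fun a' ha' => by
          split_ifs with h1
          · exact absurd (hf h1) (Ne.symm ha')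
          · rfl),
        if_pos rfl, PMF.uniformOfFinset_apply, if_pos ha₀]
    · rw [if_neg hb]
      refine Summable.tsum_eq_zero_iff (by exact ENNReal.summable) |>.mpr fun a => ?_
      rw [PMF.uniformOfFinset_apply]
      split_ifs with h1 h2
      · exact absurd (Finset.mem_image_of_mem f h2) (h1 ▸ hb)
      · rfl
      · rfl

lemma map_involutive_apply {f : List Bool → List Bool} (hf : Function.Involutive f)
    (p : PMF (List Bool)) (x : List Bool) : (p.map f) x = p (f x) := by
  rw [PMF.map_apply]
  refine tsum_eq_single (f x) (fun a ha => if_neg fun hc => ha ?_) |>.trans ?_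
  · rw [hc, hf]
  · rw [if_pos (hf x).symm]

lemma bstPMF_flip_invariant (u : List Bool) (n : ℕ) :
    (bstPMF n).map (fun t => t.image (flipAt u)) = bstPMF n := by
  induction n with
  | zero =>
    rw [bstPMF, PMF.pure_map]
    congr 1
    simp [flipAt_nil]
  | succ n ih =>
    conv_rhs => rw [bstPMF]
    rw [bstPMF, PMF.map_bind]
    conv_rhs => rw [← ih, PMF.bind_map]
    congr 1
    funext t
    simp only [Function.comp_apply]
    conv_lhs => rw [PMF.map_comp]
    conv_rhs => rw [← image_extPos,
      ← unifOr_map _ (flipAt_injective u) (flipAt_nil u), PMF.map_comp]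
    congr 1
    funext v
    simp [Function.comp, Finset.image_insert]

lemma nodePMF_flip (u : List Bool) (n : ℕ) (w : List Bool) :
    ((bstPMF n).bind unifOr) (flipAt u w) = ((bstPMF n).bind unifOr) w := by
  have key : ((bstPMF n).bind unifOr).map (flipAt u) = (bstPMF n).bind unifOr := by
    conv_rhs => rw [← bstPMF_flip_invariant u n, PMF.bind_map]
    rw [PMF.map_bind]
    congr 1
    funext t
    rw [Function.comp_apply, unifOr_map _ (flipAt_injective u) (flipAt_nil u)]
  conv_rhs => rw [← key]
  rw [map_involutive_apply (flipAt_involutive u)]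

lemma nodePMF_length (n : ℕ) (w : List Bool) :
    ((bstPMF n).bind unifOr) w =
      ((bstPMF n).bind unifOr) (List.replicate w.length false) := by
  have main : ∀ (r w : List Bool), ((bstPMF n).bind unifOr) (w ++ r) =
      ((bstPMF n).bind unifOr) (w ++ List.replicate r.length false) := by
    intro r
    induction r with
    | nil => intro w; rfl
    | cons b r ih =>
      intro w
      have h1 : ((bstPMF n).bind unifOr) (w ++ b :: r) =
          ((bstPMF n).bind unifOr) (w ++ false :: r) := by
        cases b
        · rfl
        · have := nodePMF_flip w n (w ++ true :: r)
          rw [flipAt_append_cons] at this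
          simpa using this.symm
      rw [h1]
      have h2 := ih (w ++ [false])
      simp only [List.append_assoc, List.singleton_append] at h2
      rw [h2]
      simp [List.replicate_succ]
  simpa using main w []

instance instFinLen (k : ℕ) : Fintype {v : List Bool // v.length = k} :=
  inferInstanceAs (Fintype (List.Vector Bool k))

lemma card_len_eq (k : ℕ) :
    (Finset.univ : Finset {v : List Bool // v.length = k}).card = 2 ^ k := by
  have := card_vector (α := Bool) k
  rw [Finset.card_univ]
  exact (Fintype.card_congr (Equiv.refl _)).trans this

/-- let `W` be a uniform random node of the random binary search tree.
Conditionally on `|W| = k`, the letters of `W` are i.i.d. uniform on `{0,1}`;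
equivalently, `P(W = w) = 2^{-k} P(|W| = k)` for every word `w` of length `k`. -/
theorem stmt_4 (n k : ℕ) (w : List Bool) (hw : w.length = k) :
    ((bstPMF n).bind unifOr) w =
      (1 / 2 : ℝ≥0∞) ^ k * ∑' v : {v : List Bool // v.length = k}, ((bstPMF n).bind unifOr) v := by
  classical
  have hval : ∀ v : List Bool, v.length = k →
      ((bstPMF n).bind unifOr) v = ((bstPMF n).bind unifOr) w := by
    intro v hv
    rw [nodePMF_length n v, nodePMF_length n w, hv, hw]
  have hsum : ∑' v : {v : List Bool // v.length = k}, ((bstPMF n).bind unifOr) v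
      = (2 : ℝ≥0∞) ^ k * ((bstPMF n).bind unifOr) w := by
    rw [tsum_congr (fun v : {v : List Bool // v.length = k} => hval v v.2),
      tsum_fintype, Finset.sum_const, card_len_eq k, nsmul_eq_mul]
    push_cast
    ring
  rw [hsum, ← mul_assoc, ← mul_pow]
  have h2 : (1 / 2 : ℝ≥0∞) * 2 = 1 :=
    ENNReal.div_mul_cancel two_ne_zero ENNReal.ofNat_ne_top
  rw [h2, one_pow, one_mul]
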